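/- If J is an abelian complex structure on a real Lie algebra g (i.e. J² = -id and [Jx, Jy] = [x, y] for all x, y), then g is 2-step solvable, i.e. the derived subalgebra [g, g] is abelian. -/

import Mathlib

/-!
We prove that an abelian complex structure `J` on a real Lie algebra `g` forces the
derived subalgebra to be abelian.  The proof passes through the "complexification"
`CCX g = g × g` (with `(p, q)` playing the role of `p + i q`), in which
`Aa J u = (u, -J u)` and `Bb J v = (v, J v)` span two abelian subalgebras whose sum is
everything; a Jacobi-identity chain then shows `⁅⁅A u, B v⁆, ⁅A u', B v'⁆⁆ = 0`.
-/

private def CCX (g : Type*) := g × g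

private instance ccxAddCommGroup {g : Type*} [AddCommGroup g] : AddCommGroup (CCX g) :=
  inferInstanceAs (AddCommGroup (g × g))

private instance ccxBracket {g : Type*} [LieRing g] : Bracket (CCX g) (CCX g) :=
  ⟨fun p q => ⟨⁅p.1, q.1⁆ - ⁅p.2, q.2⁆, ⁅p.1, q.2⁆ + ⁅p.2, q.1⁆⟩⟩

section

variable {g : Type*} [LieRing g]

private lemma ccext {p q : CCX g} (h1 : p.1 = q.1) (h2 : p.2 = q.2) : p = q :=
  Prod.ext h1 h2

private lemma ccb1 (p q : CCX g) : (⁅p, q⁆).1 = ⁅p.1, q.1⁆ - ⁅p.2, q.2⁆ := rfl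

private lemma ccb2 (p q : CCX g) : (⁅p, q⁆).2 = ⁅p.1, q.2⁆ + ⁅p.2, q.1⁆ := rfl

private lemma ccadd1 (p q : CCX g) : (p + q).1 = p.1 + q.1 := rfl

private lemma ccadd2 (p q : CCX g) : (p + q).2 = p.2 + q.2 := rfl

private lemma cczero1 : ((0 : CCX g)).1 = 0 := rfl

private lemma cczero2 : ((0 : CCX g)).2 = 0 := rfl

private instance ccxLieRing : LieRing (CCX g) :=
  { ccxAddCommGroup, ccxBracket with
    add_lie := by
      intro p q r
      refine ccext ?_ ?_ <;>
        simp only [ccb1, ccb2, ccadd1, ccadd2, add_lie] <;> abel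
    lie_add := by
      intro p q r
      refine ccext ?_ ?_ <;>
        simp only [ccb1, ccb2, ccadd1, ccadd2, lie_add] <;> abel
    lie_self := by
      intro p
      refine ccext ?_ ?_
      · simp [ccb1, cczero1]
      · show ⁅p.1, p.2⁆ + ⁅p.2, p.1⁆ = 0
        rw [← lie_skew]
        exact neg_add_cancel _
    leibniz_lie := by
      intro p q r
      refine ccext ?_ ?_ <;>
        simp only [ccb1, ccb2, ccadd1, ccadd2, lie_add, add_lie, lie_sub, sub_lie,
          lie_lie] <;> abel }

end

section

variable {g : Type*} [LieRing g] [LieAlgebra ℝ g]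

/-- The "(1,0)-type" element `u - i J u`. -/
private def Aa (J : g →ₗ[ℝ] g) (u : g) : CCX g := ⟨u, -(J u)⟩

/-- The "(0,1)-type" element `u + i J u`. -/
private def Bb (J : g →ₗ[ℝ] g) (u : g) : CCX g := ⟨u, J u⟩

variable (J : g →ₗ[ℝ] g)

/-- The pair `(p, q)` as an element of `CCX g`. -/
private def ccpair (p q : g) : CCX g := ⟨p, q⟩

private lemma ccJxy (hJ2 : ∀ x, J (J x) = -x)
    (hab : ∀ x y : g, ⁅J x, J y⁆ = ⁅x, y⁆) : ∀ u v : g, ⁅J u, v⁆ = -⁅u, J v⁆ := by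
  intro u v
  have h := hab (J u) v
  rw [hJ2, neg_lie] at h
  exact h.symm

private lemma ccF1 (hJ2 : ∀ x, J (J x) = -x)
    (hab : ∀ x y : g, ⁅J x, J y⁆ = ⁅x, y⁆) : ∀ u v : g, ⁅Aa J u, Aa J v⁆ = 0 := by
  intro u v
  refine ccext ?_ ?_
  · show ⁅u, v⁆ - ⁅-(J u), -(J v)⁆ = (0 : CCX g).1
    rw [neg_lie, lie_neg, neg_neg, hab, sub_self, cczero1]
  · show ⁅u, -(J v)⁆ + ⁅-(J u), v⁆ = (0 : CCX g).2
    rw [lie_neg, neg_lie, ccJxy J hJ2 hab, neg_neg, neg_add_cancel, cczero2]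

private lemma ccF2 (hJ2 : ∀ x, J (J x) = -x)
    (hab : ∀ x y : g, ⁅J x, J y⁆ = ⁅x, y⁆) : ∀ u v : g, ⁅Bb J u, Bb J v⁆ = 0 := by
  intro u v
  refine ccext ?_ ?_
  · show ⁅u, v⁆ - ⁅J u, J v⁆ = (0 : CCX g).1
    rw [hab, sub_self, cczero1]
  · show ⁅u, J v⁆ + ⁅J u, v⁆ = (0 : CCX g).2
    rw [ccJxy J hJ2 hab, add_neg_cancel, cczero2]

private lemma ccF3 (hJ2 : ∀ x, J (J x) = -x)
    (hab : ∀ x y : g, ⁅J x, J y⁆ = ⁅x, y⁆) : ∀ u v : g,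
    ⁅Aa J u, Bb J v⁆ = Aa J (⁅u, v⁆ + J ⁅u, J v⁆) + Bb J (⁅u, v⁆ - J ⁅u, J v⁆) := by
  intro u v
  refine ccext ?_ ?_
  · show ⁅u, v⁆ - ⁅-(J u), J v⁆ =
      (⁅u, v⁆ + J ⁅u, J v⁆) + (⁅u, v⁆ - J ⁅u, J v⁆)
    rw [neg_lie, sub_neg_eq_add, hab]
    abel
  · show ⁅u, J v⁆ + ⁅-(J u), v⁆ =
      -(J (⁅u, v⁆ + J ⁅u, J v⁆)) + J (⁅u, v⁆ - J ⁅u, J v⁆)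
    rw [neg_lie, ccJxy J hJ2 hab, map_add, map_sub, hJ2]
    abel

private lemma ccKey (hJ2 : ∀ x, J (J x) = -x)
    (hab : ∀ x y : g, ⁅J x, J y⁆ = ⁅x, y⁆) : ∀ u v u' v' : g,
    ⁅⁅Aa J u, Bb J v⁆, ⁅Aa J u', Bb J v'⁆⁆ = 0 := by
  have hF1 := ccF1 J hJ2 hab
  have hF2 := ccF2 J hJ2 hab
  have hF3 := ccF3 J hJ2 hab
  -- S1 : brackets with two `Aa`'s commute
  have S1 : ∀ (u u' : g) (p : CCX g),
      ⁅Aa J u, ⁅Aa J u', p⁆⁆ = ⁅Aa J u', ⁅Aa J u, p⁆⁆ := by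
    intro u u' p
    rw [leibniz_lie, hF1, zero_lie, zero_add]
  have S1B : ∀ (u u' : g) (p : CCX g),
      ⁅Bb J u, ⁅Bb J u', p⁆⁆ = ⁅Bb J u', ⁅Bb J u, p⁆⁆ := by
    intro u u' p
    rw [leibniz_lie, hF2, zero_lie, zero_add]
  -- S2 : right-multiplication by two `Bb`'s commutes
  have S2 : ∀ (p : CCX g) (u u' : g),
      ⁅⁅p, Bb J u⁆, Bb J u'⁆ = ⁅⁅p, Bb J u'⁆, Bb J u⁆ := by
    intro p u u'
    rw [lie_lie, lie_lie, hF2, hF2, lie_zero, zero_sub, zero_sub, neg_inj,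
      (lie_skew p (Bb J u')).symm, (lie_skew p (Bb J u)).symm, lie_neg, lie_neg, neg_inj]
    exact S1B u u' p
  intro u v u' v'
  have main :
      ⁅Aa J (⁅u, v'⁆ + J ⁅u, J v'⁆), Bb J (⁅u', v⁆ - J ⁅u', J v⁆)⁆ =
      ⁅Aa J (⁅u, v'⁆ + J ⁅u, J v'⁆), Bb J (⁅u', v⁆ - J ⁅u', J v⁆)⁆ +
        ⁅⁅Aa J u, Bb J v⁆, ⁅Aa J u', Bb J v'⁆⁆ := by
    calc
      ⁅Aa J (⁅u, v'⁆ + J ⁅u, J v'⁆), Bb J (⁅u', v⁆ - J ⁅u', J v⁆)⁆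
          = ⁅Aa J (⁅u, v'⁆ + J ⁅u, J v'⁆), ⁅Aa J u', Bb J v⁆⁆ := by
            rw [hF3 u' v, lie_add, hF1, zero_add]
      _ = ⁅Aa J u', ⁅Aa J (⁅u, v'⁆ + J ⁅u, J v'⁆), Bb J v⁆⁆ := S1 _ _ _
      _ = ⁅Aa J u', ⁅⁅Aa J u, Bb J v'⁆, Bb J v⁆⁆ := by
            rw [hF3 u v', add_lie, hF2, add_zero]
      _ = ⁅Aa J u', ⁅⁅Aa J u, Bb J v⁆, Bb J v'⁆⁆ := by
            rw [S2 (Aa J u) v' v]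
      _ = ⁅⁅Aa J u', ⁅Aa J u, Bb J v⁆⁆, Bb J v'⁆ +
            ⁅⁅Aa J u, Bb J v⁆, ⁅Aa J u', Bb J v'⁆⁆ := by
            rw [leibniz_lie]
      _ = ⁅⁅Aa J u, Bb J (⁅u', v⁆ - J ⁅u', J v⁆)⁆, Bb J v'⁆ +
            ⁅⁅Aa J u, Bb J v⁆, ⁅Aa J u', Bb J v'⁆⁆ := by
            rw [S1 u' u (Bb J v), hF3 u' v, lie_add, hF1, zero_add]
      _ = ⁅Aa J (⁅u, v'⁆ + J ⁅u, J v'⁆), Bb J (⁅u', v⁆ - J ⁅u', J v⁆)⁆ +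
            ⁅⁅Aa J u, Bb J v⁆, ⁅Aa J u', Bb J v'⁆⁆ := by
            rw [S2 (Aa J u) (⁅u', v⁆ - J ⁅u', J v⁆) v', hF3 u v', add_lie, hF2, add_zero]
  exact (left_eq_add.mp main)

end

/-- If `J` is an abelian complex structure on a real Lie algebra `g`
(`J² = -id` and `⁅Jx, Jy⁆ = ⁅x, y⁆`), then `g` is 2-step solvable:
the derived subalgebra is abelian. -/
theorem abelian_complex_structure_two_step_solvable
    {g : Type*} [LieRing g] [LieAlgebra ℝ g] [FiniteDimensional ℝ g]
    (J : g →ₗ[ℝ] g) (hJ2 : ∀ x, J (J x) = -x)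
    (hab : ∀ x y : g, ⁅J x, J y⁆ = ⁅x, y⁆) :
    ∀ x y z w : g, ⁅(⁅x, y⁆ : g), (⁅z, w⁆ : g)⁆ = 0 := by
  intro x y z w
  have hF1 := ccF1 J hJ2 hab
  have hF2 := ccF2 J hJ2 hab
  have key := ccKey J hJ2 hab
  have hBA : ∀ s t : g, ⁅Bb J s, Aa J t⁆ = -⁅Aa J t, Bb J s⁆ := fun s t =>
    (lie_skew (Bb J s) (Aa J t)).symm
  -- brackets of `A + B` combinations vanish doubly
  have expand : ∀ u v u' v' : g,
      ⁅⁅Aa J u + Bb J u, Aa J v + Bb J v⁆,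
        ⁅Aa J u' + Bb J u', Aa J v' + Bb J v'⁆⁆ = (0 : CCX g) := by
    intro u v u' v'
    simp only [lie_add, add_lie, hF1, hF2, hBA, key, lie_neg, neg_lie, neg_zero,
      lie_zero, zero_lie, add_zero, zero_add, neg_neg]
  -- pairs `(p, 0)` bracket componentwise
  have hpair : ∀ p q : g, ⁅ccpair p 0, ccpair q 0⁆ = ccpair ⁅p, q⁆ 0 := by
    intro p q
    refine ccext ?_ ?_
    · show ⁅p, q⁆ - ⁅(0 : g), (0 : g)⁆ = ⁅p, q⁆
      rw [zero_lie, sub_zero]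
    · show ⁅p, (0 : g)⁆ + ⁅(0 : g), q⁆ = 0
      rw [lie_zero, zero_lie, add_zero]
  -- decomposition of `(p, 0)` as `A + B`
  have hdec : ∀ p : g, ccpair p 0 =
      Aa J ((2⁻¹ : ℝ) • p) + Bb J ((2⁻¹ : ℝ) • p) := by
    intro p
    refine ccext ?_ ?_
    · show p = (2⁻¹ : ℝ) • p + (2⁻¹ : ℝ) • p
      rw [← two_smul ℝ, smul_smul]
      norm_num
    · show (0 : g) = -(J ((2⁻¹ : ℝ) • p)) + J ((2⁻¹ : ℝ) • p)
      rw [neg_add_cancel]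
  have hfinal : ccpair (⁅(⁅x, y⁆ : g), (⁅z, w⁆ : g)⁆) 0 = 0 := by
    rw [← hpair, ← hpair, ← hpair, hdec x, hdec y, hdec z, hdec w]
    exact expand _ _ _ _
  have := congrArg (fun t : CCX g => t.1) hfinal
  exact this
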